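/- Fix n ≥ 2. Let F : (Fin n → Bool) → Bool be the total function with F x = true iff x i = true for all i, and let C = {x | x 0 = true → ∀ i, x i = true}. Let x₁ be the all-true instance. Then: (i) the term t_full with t_full i = some true for all i is the unique sufficient reason of F(x₁)=1 (for F viewed as the partial function some ∘ F); (ii) the term t₁ with t₁ 0 = some true and t₁ i = none for i ≠ 0 is a sufficient reason of F_C(x₁)=1; and (iii) t₁ properly subsumes t_full, i.e., [t_full] is a proper subset of [t₁]. -/

import Mathlib

/-- An instance `x : Fin n → Bool` satisfies the term `t` if `x i = b` whenever `t i = some b`. -/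
def Satisfies {n : ℕ} (x : Fin n → Bool) (t : Fin n → Option Bool) : Prop :=
  ∀ i b, t i = some b → x i = b

/-- The set of instances satisfying a term. -/
def termSet {n : ℕ} (t : Fin n → Option Bool) : Set (Fin n → Bool) :=
  {x | Satisfies x t}

/-- A term is an implicant of a partial Boolean function `f` if `f` is never `some false` on it. -/
def Implicant {n : ℕ} (f : (Fin n → Bool) → Option Bool) (t : Fin n → Option Bool) : Prop :=
  ∀ x ∈ termSet t, f x ≠ some false

/-- A prime implicant: an implicant not properly subsumed by any other implicant. -/
def PrimeImplicant {n : ℕ} (f : (Fin n → Bool) → Option Bool) (t : Fin n → Option Bool) : Prop :=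
  Implicant f t ∧ ∀ s, Implicant f s → termSet t ⊆ termSet s → termSet s = termSet t

/-- A sufficient reason of `f(x)=1`: a prime implicant of `f` satisfied by `x`. -/
def SufficientReason {n : ℕ} (f : (Fin n → Bool) → Option Bool) (x : Fin n → Bool)
    (t : Fin n → Option Bool) : Prop :=
  PrimeImplicant f t ∧ Satisfies x t

open Classical in
/-- The constrained partial function `F_C`. -/
noncomputable def constrain {n : ℕ} (F : (Fin n → Bool) → Bool) (C : Set (Fin n → Bool)) :
    (Fin n → Bool) → Option Bool :=
  fun x => if x ∈ C then some (F x) else Option.none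

/-- The total completion `f̄` of a partial function: true iff `f x ≠ some false`. -/
def totalCompletion {n : ℕ} (f : (Fin n → Bool) → Option Bool) : (Fin n → Bool) → Bool :=
  fun x => decide (f x ≠ some false)

theorem stmt15 (n : ℕ) (hn : 2 ≤ n)
    (F : (Fin n → Bool) → Bool) (hF : ∀ x, F x = true ↔ ∀ i, x i = true)
    (C : Set (Fin n → Bool))
    (hC : C = {x : Fin n → Bool | x ⟨0, by omega⟩ = true → ∀ i, x i = true})
    (x₁ : Fin n → Bool) (hx₁ : ∀ i, x₁ i = true)
    (tfull : Fin n → Option Bool) (htfull : ∀ i, tfull i = some true)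
    (t₁ : Fin n → Option Bool) (ht₁0 : t₁ ⟨0, by omega⟩ = some true)
    (ht₁ : ∀ i : Fin n, i ≠ ⟨0, by omega⟩ → t₁ i = none) :
    (SufficientReason (fun y => some (F y)) x₁ tfull ∧
        ∀ t : Fin n → Option Bool, SufficientReason (fun y => some (F y)) x₁ t → t = tfull) ∧
      SufficientReason (constrain F C) x₁ t₁ ∧
      (termSet tfull ⊆ termSet t₁ ∧ termSet tfull ≠ termSet t₁) := by

  have i0 : Fin n := ⟨0, by omega⟩
  have hsat_tfull : ∀ x : Fin n → Bool, Satisfies x tfull ↔ ∀ i, x i = true := by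
    intro x
    constructor
    · intro h i; exact h i true (htfull i)
    · intro h i b hb; rw [htfull i] at hb; cases hb; exact h i
  have hsat_t1 : ∀ x : Fin n → Bool, Satisfies x t₁ ↔ x ⟨0, by omega⟩ = true := by
    intro x; constructor
    · intro h; exact h _ true ht₁0
    · intro h i b hb
      by_cases hi : i = ⟨0, by omega⟩
      · subst hi; rw [ht₁0] at hb; cases hb; exact h
      · rw [ht₁ i hi] at hb; cases hb
  have hFfalse : ∀ x : Fin n → Bool, F x = false ↔ ¬ ∀ i, x i = true := by
    intro x; rw [← hF x]; cases F x <;> simp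
  -- any implicant of some ∘ F only contains the all-true point
  have hkey : ∀ t, Implicant (fun y => some (F y)) t → ∀ x ∈ termSet t, ∀ i, x i = true := by
    intro t ht x hx
    by_contra hne
    have hfx : F x = false := (hFfalse x).mpr hne
    exact ht x hx (by simp [hfx])
  have himp_tfull : Implicant (fun y => some (F y)) tfull := by
    intro x hx hfx
    have hall : ∀ i, x i = true := (hsat_tfull x).mp hx
    have : F x = true := (hF x).mpr hall
    simp [this] at hfx
  have hsr_tfull : SufficientReason (fun y => some (F y)) x₁ tfull := by
    refine ⟨⟨himp_tfull, ?_⟩, (hsat_tfull x₁).mpr hx₁⟩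
    intro s hs hsub
    apply Set.Subset.antisymm _ hsub
    intro x hx
    exact (hsat_tfull x).mpr (hkey s hs x hx)
  have huniq : ∀ t : Fin n → Option Bool,
      SufficientReason (fun y => some (F y)) x₁ t → t = tfull := by
    intro t ⟨⟨himp, _⟩, hsat⟩
    funext i
    rw [htfull i]
    cases hti : t i with
    | none =>
      exfalso
      set y : Fin n → Bool := Function.update x₁ i false with hy
      have hys : Satisfies y t := by
        intro j b hb
        by_cases hj : j = i
        · subst hj; rw [hti] at hb; cases hb
        · rw [hy, Function.update_of_ne hj]; exact hsat j b hb
      have hyf : F y = false := by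
        apply (hFfalse y).mpr
        intro hall
        have := hall i
        simp [hy, Function.update_self] at this
      exact himp y hys (by simp [hyf])
    | some b =>
      have := hsat i b hti
      rw [hx₁ i] at this
      rw [← this]
  -- part (ii)
  have himp_t1 : Implicant (constrain F C) t₁ := by
    intro x hx hfx
    have h0 : x ⟨0, by omega⟩ = true := (hsat_t1 x).mp hx
    unfold constrain at hfx
    by_cases hxC : x ∈ C
    · rw [if_pos hxC] at hfx
      have hall : ∀ i, x i = true := by
        rw [hC] at hxC; exact hxC h0
      have : F x = true := (hF x).mpr hall
      simp [this] at hfx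
    · rw [if_neg hxC] at hfx; cases hfx
  have hsr_t1 : SufficientReason (constrain F C) x₁ t₁ := by
    refine ⟨⟨himp_t1, ?_⟩, (hsat_t1 x₁).mpr (hx₁ _)⟩
    intro s hs hsub
    apply Set.Subset.antisymm _ hsub
    intro x hx
    apply (hsat_t1 x).mpr
    by_contra h0
    have h0' : x ⟨0, by omega⟩ = false := by
      cases h : x ⟨0, (by omega : (0:ℕ) < n)⟩ <;> simp_all
    have hxC : x ∈ C := by
      rw [hC]; intro htr; rw [h0'] at htr; cases htr
    have hfx : F x = false := by
      apply (hFfalse x).mpr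
      intro hall
      have := hall ⟨0, by omega⟩
      rw [h0'] at this; cases this
    exact hs x hx (by unfold constrain; rw [if_pos hxC, hfx])
  refine ⟨⟨hsr_tfull, huniq⟩, hsr_t1, ?_, ?_⟩
  · intro x hx
    exact (hsat_t1 x).mpr ((hsat_tfull x).mp hx _)
  · intro heq
    set y : Fin n → Bool := fun j => decide (j = ⟨0, by omega⟩) with hy
    have hy1 : y ∈ termSet t₁ := (hsat_t1 y).mpr (by simp [hy])
    rw [← heq] at hy1
    have hall : ∀ i, y i = true := (hsat_tfull y).mp hy1
    have := hall ⟨1, by omega⟩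
    simp [hy, Fin.mk.injEq] at this
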